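/- For every natural number n, the number of permutations of {1,…,n} that avoid the pattern (3,2,1) equals the n-th Catalan number C_n. -/

import Mathlib

open Finset

/-- Staircase sequences: running-max profiles of 321-avoiding permutations. -/
def Sset (n : ℕ) : Finset (Fin (n+1) → Fin (n+1)) :=
  univ.filter fun m => m 0 = 0 ∧ m (Fin.last n) = Fin.last n ∧
    (∀ i j : Fin (n+1), i ≤ j → m i ≤ m j) ∧ (∀ i : Fin (n+1), (i:ℕ) ≤ (m i : ℕ))

lemma mem_Sset {n : ℕ} {m : Fin (n+1) → Fin (n+1)} :
    m ∈ Sset n ↔ m 0 = 0 ∧ m (Fin.last n) = Fin.last n ∧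
      (∀ i j : Fin (n+1), i ≤ j → m i ≤ m j) ∧ (∀ i : Fin (n+1), (i:ℕ) ≤ (m i : ℕ)) := by
  simp [Sset]

lemma card_Sset_zero : (Sset 0).card = 1 := by decide

/-- The set of "touch points" `j ≥ 1` with `m j = j`. -/
def tset {N : ℕ} (m : Fin (N+1) → Fin (N+1)) : Finset (Fin (N+1)) :=
  univ.filter fun j => 1 ≤ (j:ℕ) ∧ (m j:ℕ) = (j:ℕ)

/-- The first touch point. -/
def tch {N : ℕ} (m : Fin (N+1) → Fin (N+1)) : ℕ :=
  if h : (tset m).Nonempty then (((tset m).min' h : Fin (N+1)) : ℕ) else 1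

lemma tch_le {N : ℕ} (hN : 1 ≤ N) (m : Fin (N+1) → Fin (N+1)) : tch m ≤ N := by
  unfold tch
  split
  · exact Nat.lt_succ_iff.mp (Fin.is_lt _)
  · omega

lemma tch_spec {N : ℕ} {m : Fin (N+1) → Fin (N+1)} (hN : 1 ≤ N) (hm : m ∈ Sset N) :
    1 ≤ tch m ∧ (m ⟨tch m, by have := tch_le hN m; omega⟩ : ℕ) = tch m ∧
      ∀ i : Fin (N+1), 1 ≤ (i:ℕ) → (i:ℕ) < tch m → (m i:ℕ) ≠ (i:ℕ) := by
  obtain ⟨h0, hlast, hmono, hge⟩ := mem_Sset.mp hm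
  have hne : (tset m).Nonempty := by
    refine ⟨Fin.last N, ?_⟩
    simp only [tset, mem_filter, mem_univ, true_and]
    refine ⟨by simp [Fin.val_last]; omega, by rw [hlast]⟩
  constructor
  · unfold tch
    rw [dif_pos hne]
    have := (tset m).min'_mem hne
    simp [tset] at this
    exact this.1
  constructor
  · have hmem := (tset m).min'_mem hne
    simp only [tset, mem_filter, mem_univ, true_and] at hmem
    have heq : (⟨tch m, by have := tch_le hN m; omega⟩ : Fin (N+1)) = (tset m).min' hne := by
      apply Fin.ext
      simp only [tch, dif_pos hne]
    rw [heq]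
    have : tch m = (((tset m).min' hne : Fin (N+1)) : ℕ) := by simp only [tch, dif_pos hne]
    rw [this]
    exact hmem.2
  · intro i h1 h2 hc
    have hi : i ∈ tset m := by simp [tset, h1, hc]
    have := (tset m).min'_le i hi
    unfold tch at h2
    rw [dif_pos hne] at h2
    exact absurd (by exact_mod_cast this) (not_le.mpr h2)

lemma tch_eq {N : ℕ} {m : Fin (N+1) → Fin (N+1)} {J : ℕ} (hJ1 : 1 ≤ J) (hJN : J ≤ N)
    (ht : (m ⟨J, by omega⟩ : ℕ) = J)
    (hlt : ∀ i : Fin (N+1), 1 ≤ (i:ℕ) → (i:ℕ) < J → (m i:ℕ) ≠ (i:ℕ)) : tch m = J := by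
  have hmem : (⟨J, by omega⟩ : Fin (N+1)) ∈ tset m := by
    simp only [tset, mem_filter, mem_univ, true_and]
    exact ⟨hJ1, ht⟩
  have hne : (tset m).Nonempty := ⟨_, hmem⟩
  have h1 : tch m = (((tset m).min' hne : Fin (N+1)) : ℕ) := by simp only [tch, dif_pos hne]
  have hle : ((tset m).min' hne : ℕ) ≤ J := by
    have := (tset m).min'_le _ hmem
    exact_mod_cast this
  have hminmem := (tset m).min'_mem hne
  simp only [tset, mem_filter, mem_univ, true_and] at hminmem
  rcases lt_or_eq_of_le hle with h | h
  · exact absurd hminmem.2 (hlt _ hminmem.1 h)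
  · omega

lemma fiber_facts {k j : ℕ} (hj : j ≤ k) {m : Fin (k+2) → Fin (k+2)}
    (hm : m ∈ (Sset (k+1)).filter fun m => tch m = j+1) :
    m 0 = 0 ∧ m (Fin.last (k+1)) = Fin.last (k+1) ∧
    (∀ a b : Fin (k+2), a ≤ b → m a ≤ m b) ∧ (∀ i : Fin (k+2), (i:ℕ) ≤ (m i : ℕ)) ∧
    ((m ⟨j+1, by omega⟩ : ℕ) = j+1) ∧
    (∀ i : Fin (k+2), 1 ≤ (i:ℕ) → (i:ℕ) < j+1 → (i:ℕ) < (m i:ℕ)) := by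
  rw [mem_filter] at hm
  obtain ⟨hS, htch⟩ := hm
  obtain ⟨h0, hlast, hmono, hge⟩ := mem_Sset.mp hS
  obtain ⟨ht1, ht2, ht3⟩ := tch_spec (by omega) hS
  refine ⟨h0, hlast, hmono, hge, ?_, ?_⟩
  · have heq : (⟨tch m, by have := tch_le (by omega) m; omega⟩ : Fin (k+2)) = ⟨j+1, by omega⟩ :=
      Fin.ext (by simpa using htch)
    rw [heq] at ht2
    omega
  · intro i hi1 hi2
    have := ht3 i hi1 (by omega)
    have := hge i
    omega

def fwd (k j : ℕ) (hj : j ≤ k) (m : Fin (k+2) → Fin (k+2)) :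
    (Fin (j+1) → Fin (j+1)) × (Fin (k-j+1) → Fin (k-j+1)) :=
  ( fun x => ⟨min (if (x:ℕ) = 0 then 0 else (m ⟨(x:ℕ), by have := x.isLt; omega⟩ : ℕ) - 1) j,
      by omega⟩,
    fun y => ⟨(m ⟨(y:ℕ) + (j+1), by have := y.isLt; omega⟩ : ℕ) - (j+1), by
      have := (m ⟨(y:ℕ) + (j+1), by have := y.isLt; omega⟩).isLt
      have := y.isLt
      omega⟩ )

def bwd (k j : ℕ) (hj : j ≤ k) (p : (Fin (j+1) → Fin (j+1)) × (Fin (k-j+1) → Fin (k-j+1))) :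
    Fin (k+2) → Fin (k+2) :=
  fun i => if (i:ℕ) = 0 then 0
    else if h : (i:ℕ) < j+1 then ⟨(p.1 ⟨(i:ℕ), h⟩ : ℕ) + 1, by have := (p.1 ⟨(i:ℕ),h⟩).isLt; omega⟩
    else ⟨(p.2 ⟨(i:ℕ) - (j+1), by have := i.isLt; omega⟩ : ℕ) + (j+1), by
      have := (p.2 ⟨(i:ℕ) - (j+1), by have := i.isLt; omega⟩).isLt; omega⟩

lemma fwd_fst_val {k j : ℕ} (hj : j ≤ k) {m : Fin (k+2) → Fin (k+2)}
    (hm : m ∈ (Sset (k+1)).filter fun m => tch m = j+1) (x : Fin (j+1)) :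
    ((fwd k j hj m).1 x : ℕ)
      = if (x:ℕ) = 0 then 0 else (m ⟨(x:ℕ), by have := x.isLt; omega⟩ : ℕ) - 1 := by
  obtain ⟨h0, hlast, hmono, hge, ht, hnt⟩ := fiber_facts hj hm
  have hb : (m ⟨(x:ℕ), by have := x.isLt; omega⟩ : ℕ) ≤ j + 1 := by
    have := hmono ⟨(x:ℕ), by have := x.isLt; omega⟩ ⟨j+1, by omega⟩
      (by simp only [Fin.mk_le_mk]; have := x.isLt; omega)
    simp only [Fin.le_def] at this
    omega
  simp only [fwd]
  split <;> omega

lemma fwd_fst_val' {k j : ℕ} (hj : j ≤ k) {m : Fin (k+2) → Fin (k+2)}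
    (hm : m ∈ (Sset (k+1)).filter fun m => tch m = j+1) (x : ℕ) (hx : x < j+1) :
    ((fwd k j hj m).1 ⟨x, hx⟩ : ℕ)
      = if x = 0 then 0 else (m ⟨x, by omega⟩ : ℕ) - 1 :=
  fwd_fst_val hj hm ⟨x, hx⟩

lemma fwd_mem {k j : ℕ} (hj : j ≤ k) {m : Fin (k+2) → Fin (k+2)}
    (hm : m ∈ (Sset (k+1)).filter fun m => tch m = j+1) :
    fwd k j hj m ∈ Sset j ×ˢ Sset (k-j) := by
  obtain ⟨h0, hlast, hmono, hge, ht, hnt⟩ := fiber_facts hj hm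
  have hmono' : ∀ a b : ℕ, ∀ (ha : a < k+2) (hb : b < k+2), a ≤ b →
      (m ⟨a, ha⟩ : ℕ) ≤ (m ⟨b, hb⟩ : ℕ) := by
    intro a b ha hb hab
    exact hmono ⟨a, ha⟩ ⟨b, hb⟩ (by simp only [Fin.mk_le_mk]; omega)
  rw [mem_product]
  constructor
  · rw [mem_Sset]
    refine ⟨?_, ?_, ?_, ?_⟩
    · apply Fin.ext
      rw [fwd_fst_val hj hm]
      simp
    · apply Fin.ext
      rw [fwd_fst_val hj hm]
      simp only [Fin.val_last]
      by_cases hj0 : j = 0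
      · simp [hj0]
      · rw [if_neg hj0]
        have h1 : j < (m ⟨j, by omega⟩ : ℕ) := hnt ⟨j, by omega⟩ (by simpa using Nat.one_le_iff_ne_zero.mpr hj0) (by simp)
        have h2 : (m ⟨j, by omega⟩ : ℕ) ≤ (m ⟨j+1, by omega⟩ : ℕ) := hmono' _ _ _ _ (by omega)
        omega
    · intro a b hab
      rw [Fin.le_def, fwd_fst_val hj hm, fwd_fst_val hj hm]
      rw [Fin.le_def] at hab
      by_cases ha0 : (a:ℕ) = 0
      · simp [ha0]
      · rw [if_neg ha0, if_neg (by omega)]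
        have := hmono' (a:ℕ) (b:ℕ) (by have := a.isLt; omega) (by have := b.isLt; omega) hab
        omega
    · intro x
      rw [fwd_fst_val hj hm]
      by_cases hx0 : (x:ℕ) = 0
      · simp [hx0]
      · rw [if_neg hx0]
        have h5 := hnt ⟨(x:ℕ), by have := x.isLt; omega⟩ (by simp; omega) (by simp [x.isLt])
        have hxx : ((⟨(x:ℕ), by have := x.isLt; omega⟩ : Fin (k+2)) : ℕ) = (x:ℕ) := rfl
        omega
  · rw [mem_Sset]
    refine ⟨?_, ?_, ?_, ?_⟩
    · apply Fin.ext
      simp only [fwd]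
      simp only [Fin.val_zero]
      have : ((0 : Fin (k-j+1)) : ℕ) = 0 := rfl
      simp only [this, Nat.zero_add]
      omega
    · apply Fin.ext
      simp only [fwd, Fin.val_last]
      have hidx : (⟨k - j + (j+1), by omega⟩ : Fin (k+2)) = Fin.last (k+1) := by
        apply Fin.ext
        simp [Fin.val_last]
        omega
      rw [hidx, hlast]
      simp [Fin.val_last]
    · intro a b hab
      simp only [fwd, Fin.le_def] at *
      have := hmono' ((a:ℕ)+(j+1)) ((b:ℕ)+(j+1)) (by have := a.isLt; omega) (by have := b.isLt; omega) (by omega)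
      omega
    · intro y
      simp only [fwd]
      have := hge ⟨(y:ℕ)+(j+1), by have := y.isLt; omega⟩
      simp only at this
      omega

lemma bwd_mem {k j : ℕ} (hj : j ≤ k) {p : (Fin (j+1) → Fin (j+1)) × (Fin (k-j+1) → Fin (k-j+1))}
    (hp : p ∈ Sset j ×ˢ Sset (k-j)) :
    bwd k j hj p ∈ (Sset (k+1)).filter fun m => tch m = j+1 := by
  rw [mem_product] at hp
  obtain ⟨hp1, hp2⟩ := hp
  obtain ⟨u0, ulast, umono, uge⟩ := mem_Sset.mp hp1
  obtain ⟨v0, vlast, vmono, vge⟩ := mem_Sset.mp hp2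
  have uval : ∀ (a : ℕ) (ha : a < j+1), (p.1 ⟨a, ha⟩ : ℕ) ≤ j := by
    intro a ha; have := (p.1 ⟨a, ha⟩).isLt; omega
  have uge' : ∀ (a : ℕ) (ha : a < j+1), a ≤ (p.1 ⟨a, ha⟩ : ℕ) := fun a ha => uge ⟨a, ha⟩
  have vge' : ∀ (a : ℕ) (ha : a < k-j+1), a ≤ (p.2 ⟨a, ha⟩ : ℕ) := fun a ha => vge ⟨a, ha⟩
  have hval : ∀ (i : Fin (k+2)), ((bwd k j hj p i : Fin (k+2)) : ℕ) =
      if (i:ℕ) = 0 then 0 else if h : (i:ℕ) < j+1 then (p.1 ⟨(i:ℕ), h⟩ : ℕ) + 1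
      else (p.2 ⟨(i:ℕ) - (j+1), by have := i.isLt; omega⟩ : ℕ) + (j+1) := by
    intro i
    simp only [bwd]
    split_ifs <;> rfl
  rw [mem_filter]
  refine ⟨mem_Sset.mpr ⟨?_, ?_, ?_, ?_⟩, ?_⟩
  · apply Fin.ext
    rw [hval]
    simp
  · apply Fin.ext
    rw [hval]
    rw [if_neg (by simp only [Fin.val_last]; omega), dif_neg (by simp only [Fin.val_last]; omega)]
    have hix : (⟨(Fin.last (k+1) : ℕ) - (j+1), by simp only [Fin.val_last]; omega⟩ : Fin (k-j+1))
        = Fin.last (k-j) := by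
      apply Fin.ext
      simp only [Fin.val_last]
      omega
    rw [hix, vlast]
    simp only [Fin.val_last]
    omega
  · intro a b hab
    rw [Fin.le_def] at hab ⊢
    rw [hval, hval]
    by_cases ha0 : (a:ℕ) = 0
    · rw [if_pos ha0]
      exact Nat.zero_le _
    · rw [if_neg ha0, if_neg (by omega)]
      by_cases ha1 : (a:ℕ) < j+1
      · rw [dif_pos ha1]
        by_cases hb1 : (b:ℕ) < j+1
        · rw [dif_pos hb1]
          have := umono ⟨(a:ℕ), ha1⟩ ⟨(b:ℕ), hb1⟩ (by simp only [Fin.mk_le_mk]; omega)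
          rw [Fin.le_def] at this
          have := uval (a:ℕ) ha1
          omega
        · rw [dif_neg hb1]
          have := uval (a:ℕ) ha1
          omega
      · rw [dif_neg ha1, dif_neg (by omega)]
        have := vmono ⟨(a:ℕ) - (j+1), by have := a.isLt; omega⟩ ⟨(b:ℕ) - (j+1), by have := b.isLt; omega⟩
          (by simp only [Fin.mk_le_mk]; omega)
        rw [Fin.le_def] at this
        omega
  · intro i
    rw [hval]
    by_cases hi0 : (i:ℕ) = 0
    · omega
    · rw [if_neg hi0]
      by_cases hi1 : (i:ℕ) < j+1
      · rw [dif_pos hi1]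
        have := uge' (i:ℕ) hi1
        omega
      · rw [dif_neg hi1]
        have := vge' ((i:ℕ) - (j+1)) (by have := i.isLt; omega)
        omega
  · apply tch_eq (by omega) (by omega)
    · rw [hval]
      rw [if_neg (by simp), dif_neg (by simp)]
      have hix : (⟨((⟨j+1, by omega⟩ : Fin (k+2)) : ℕ) - (j+1), by omega⟩ : Fin (k-j+1)) = 0 := by
        apply Fin.ext
        simp
      rw [hix, v0]
      simp
    · intro i h1 h2
      rw [hval, if_neg (by omega), dif_pos h2]
      have := uge' (i:ℕ) h2
      omega

lemma bwd_fwd {k j : ℕ} (hj : j ≤ k) {m : Fin (k+2) → Fin (k+2)}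
    (hm : m ∈ (Sset (k+1)).filter fun m => tch m = j+1) :
    bwd k j hj (fwd k j hj m) = m := by
  obtain ⟨h0, hlast, hmono, hge, ht, hnt⟩ := fiber_facts hj hm
  funext i
  apply Fin.ext
  simp only [bwd]
  by_cases hi0 : (i:ℕ) = 0
  · rw [if_pos hi0]
    have : i = 0 := Fin.ext (by simpa using hi0)
    rw [this, h0]
  · rw [if_neg hi0]
    by_cases hi1 : (i:ℕ) < j+1
    · rw [dif_pos hi1]
      have hv := fwd_fst_val' hj hm (i:ℕ) hi1
      simp only [Fin.val_mk]
      rw [hv, if_neg hi0]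
      simp only [Fin.eta]
      have hmi : (i:ℕ) < (m i : ℕ) := hnt i (by omega) hi1
      omega
    · rw [dif_neg hi1]
      simp only [fwd, Fin.val_mk]
      have hii : (⟨(i:ℕ) - (j+1) + (j+1), by have := i.isLt; omega⟩ : Fin (k+2)) = i :=
        Fin.ext (by simp only [Fin.val_mk]; omega)
      rw [hii]
      have := hge i
      omega

lemma fwd_bwd {k j : ℕ} (hj : j ≤ k) {p : (Fin (j+1) → Fin (j+1)) × (Fin (k-j+1) → Fin (k-j+1))}
    (hp : p ∈ Sset j ×ˢ Sset (k-j)) :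
    fwd k j hj (bwd k j hj p) = p := by
  rw [mem_product] at hp
  obtain ⟨hp1, hp2⟩ := hp
  obtain ⟨u0, ulast, umono, uge⟩ := mem_Sset.mp hp1
  obtain ⟨v0, vlast, vmono, vge⟩ := mem_Sset.mp hp2
  apply Prod.ext
  · funext x
    apply Fin.ext
    have hv := fwd_fst_val' hj (bwd_mem hj (mem_product.mpr ⟨hp1, hp2⟩)) (x:ℕ) x.isLt
    simp only [Fin.eta] at hv
    rw [hv]
    by_cases hx0 : (x:ℕ) = 0
    · rw [if_pos hx0]
      have : x = 0 := Fin.ext (by simpa using hx0)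
      rw [this, u0]
      rfl
    · rw [if_neg hx0]
      simp only [bwd, Fin.val_mk]
      rw [if_neg hx0, dif_pos (by have := x.isLt; omega : (x:ℕ) < j+1)]
      simp only [Fin.val_mk, Fin.eta]
      omega
  · funext y
    apply Fin.ext
    simp only [fwd, bwd, Fin.val_mk]
    rw [if_neg (by omega), dif_neg (by omega)]
    simp only [Fin.val_mk]
    have hyy : (⟨(y:ℕ) + (j+1) - (j+1), by have := y.isLt; omega⟩ : Fin (k-j+1)) = y :=
      Fin.ext (by simp only [Fin.val_mk]; omega)
    rw [hyy]
    omega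

lemma fiber_card (k j : ℕ) (hj : j ≤ k) :
    ((Sset (k+1)).filter fun m => tch m = j+1).card = (Sset j).card * (Sset (k-j)).card := by
  rw [← card_product]
  exact Finset.card_nbij' (fwd k j hj) (bwd k j hj) (fun m hm => fwd_mem hj hm)
    (fun p hp => bwd_mem hj hp) (fun m hm => bwd_fwd hj hm) (fun p hp => fwd_bwd hj hp)

lemma card_Sset : ∀ n : ℕ, (Sset n).card = catalan n := by
  intro n
  induction n using Nat.strong_induction_on with
  | _ n ih =>
    match n with
    | 0 => simpa using card_Sset_zero
    | (k+1) =>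
      have hfib : (Sset (k+1)).card =
          ∑ jj : Fin (k+1), ((Sset (k+1)).filter fun m => tch m = (jj:ℕ)+1).card := by
        rw [card_eq_sum_card_fiberwise
          (f := fun m => (⟨tch m - 1, by have := tch_le (by omega : 1 ≤ k+1) m; omega⟩ : Fin (k+1)))
          (t := univ) (fun x _ => mem_univ _)]
        apply Finset.sum_congr rfl
        intro jj _
        apply congrArg Finset.card
        apply Finset.filter_congr
        intro m hm
        have h1 := (tch_spec (by omega : 1 ≤ k+1) hm).1
        constructor
        · intro h
          have := Fin.ext_iff.mp h
          simp only [Fin.val_mk] at this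
          omega
        · intro h
          apply Fin.ext
          simp only [Fin.val_mk]
          omega
      rw [hfib, catalan_succ]
      apply Finset.sum_congr rfl
      intro jj _
      have hjk : (jj:ℕ) ≤ k := by have := jj.isLt; omega
      rw [fiber_card k (jj:ℕ) hjk, ih (jj:ℕ) (by omega), ih (k - (jj:ℕ)) (by omega)]

/-! ### Step B: 321-avoiding permutations vs staircase sequences -/

def runMax {n : ℕ} (ρ : Equiv.Perm (Fin n)) (i : ℕ) : ℕ :=
  (univ.filter fun j : Fin n => (j:ℕ) < i).sup fun j => (ρ j : ℕ) + 1

lemma runMax_le {n : ℕ} (ρ : Equiv.Perm (Fin n)) (i : ℕ) : runMax ρ i ≤ n :=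
  Finset.sup_le fun j _ => (ρ j).isLt

lemma runMax_mono {n : ℕ} (ρ : Equiv.Perm (Fin n)) {i i' : ℕ} (h : i ≤ i') :
    runMax ρ i ≤ runMax ρ i' := by
  apply Finset.sup_le
  intro j hj
  simp only [mem_filter, mem_univ, true_and] at hj
  exact Finset.le_sup (f := fun j => (ρ j : ℕ) + 1)
    (by simp only [mem_filter, mem_univ, true_and]; omega)

lemma runMax_zero {n : ℕ} (ρ : Equiv.Perm (Fin n)) : runMax ρ 0 = 0 := by
  unfold runMax
  convert Finset.sup_empty
  apply Finset.filter_false_of_mem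
  intro j _
  omega
  rfl

lemma runMax_succ {n : ℕ} (ρ : Equiv.Perm (Fin n)) (i : ℕ) (hi : i < n) :
    runMax ρ (i+1) = max ((ρ ⟨i, hi⟩ : ℕ) + 1) (runMax ρ i) := by
  unfold runMax
  have : (univ.filter fun j : Fin n => (j:ℕ) < i+1)
      = insert ⟨i, hi⟩ (univ.filter fun j : Fin n => (j:ℕ) < i) := by
    ext j
    simp only [mem_filter, mem_univ, true_and, mem_insert]
    constructor
    · intro h
      rcases Nat.lt_succ_iff_lt_or_eq.mp h with h | h
      · exact Or.inr h
      · exact Or.inl (Fin.ext h)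
    · rintro (rfl | h)
      · exact Nat.lt_succ_self i
      · omega
  rw [this, Finset.sup_insert]

lemma card_filter_val_lt {n : ℕ} (B : ℕ) (hB : B ≤ n) :
    (univ.filter fun j : Fin n => (j:ℕ) < B).card = B := by
  have h := Finset.card_nbij (i := Fin.val) (s := univ.filter fun j : Fin n => (j:ℕ) < B)
    (t := Finset.range B) ?_ ?_ ?_
  · rw [Finset.card_range] at h
    exact h
  · intro a ha
    simp only [Finset.coe_filter, Set.mem_setOf_eq, mem_filter, Finset.mem_coe] at ha
    simp [ha.2]
  · intro a ha b hb hab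
    exact Fin.ext hab
  · intro b hb
    simp only [Finset.coe_range, Set.mem_Iio] at hb
    refine ⟨⟨b, by omega⟩, ?_, rfl⟩
    simp [hb]

lemma le_runMax {n : ℕ} (ρ : Equiv.Perm (Fin n)) {i : ℕ} (hi : i ≤ n) : i ≤ runMax ρ i := by
  have hsub : Finset.image (fun j => (ρ j : ℕ)) (univ.filter fun j : Fin n => (j:ℕ) < i)
      ⊆ Finset.range (runMax ρ i) := by
    intro b hb
    simp only [Finset.mem_image] at hb
    obtain ⟨j, hj, rfl⟩ := hb
    simp only [Finset.mem_range]
    have h2 : (ρ j : ℕ) + 1 ≤ runMax ρ i := Finset.le_sup (f := fun j => (ρ j : ℕ) + 1) hj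
    omega
  have h1 := Finset.card_le_card hsub
  rw [Finset.card_image_of_injOn (fun a _ b _ hab => ρ.injective (Fin.ext hab))] at h1
  rw [card_filter_val_lt i hi, Finset.card_range] at h1
  exact h1

def toSeq {n : ℕ} (ρ : Equiv.Perm (Fin n)) : Fin (n+1) → Fin (n+1) :=
  fun i => ⟨runMax ρ (i:ℕ), by have := runMax_le ρ (i:ℕ); omega⟩

lemma toSeq_mem_Sset {n : ℕ} (ρ : Equiv.Perm (Fin n)) : toSeq ρ ∈ Sset n := by
  rw [mem_Sset]
  refine ⟨Fin.ext ?_, Fin.ext ?_, ?_, ?_⟩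
  · simpa [toSeq] using runMax_zero ρ
  · simp only [toSeq, Fin.val_last]
    have h1 := runMax_le ρ n
    have h2 := le_runMax ρ (le_refl n)
    omega
  · intro a b hab
    simp only [toSeq, Fin.le_def] at *
    exact runMax_mono ρ hab
  · intro i
    simp only [toSeq]
    exact le_runMax ρ (by have := i.isLt; omega)

def AvP {n : ℕ} (ρ : Equiv.Perm (Fin n)) : Prop :=
  ∀ a b c : Fin n, a < b → b < c → ¬(ρ c < ρ b ∧ ρ b < ρ a)

lemma nonrec_mono {n : ℕ} {ρ : Equiv.Perm (Fin n)} (hav : AvP ρ) {i j : Fin n}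
    (hnr : (ρ i : ℕ) < runMax ρ (i:ℕ)) (hij : i < j) : ρ i < ρ j := by
  have hle : (ρ i : ℕ) + 1 ≤ runMax ρ (i:ℕ) := hnr
  have hex : ∃ a ∈ (univ.filter fun j : Fin n => (j:ℕ) < (i:ℕ)), (ρ i : ℕ) < (ρ a : ℕ) + 1 := by
    by_contra hc
    push_neg at hc
    have : runMax ρ (i:ℕ) ≤ (ρ i : ℕ) := Finset.sup_le fun a ha => hc a ha
    omega
  obtain ⟨a, ha, hval⟩ := hex
  simp only [mem_filter, mem_univ, true_and] at ha
  have hai : a < i := Fin.lt_def.mpr ha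
  have hane : ρ a ≠ ρ i := fun h => absurd (ρ.injective h) (Fin.ne_of_lt hai)
  have haval : ρ i < ρ a := Fin.lt_def.mpr (by
    have := Fin.val_ne_of_ne hane
    omega)
  by_contra hc
  have hjne : ρ j ≠ ρ i := fun h => absurd (ρ.injective h) (Fin.ne_of_lt hij).symm
  have hji : ρ j < ρ i := by
    rcases lt_or_gt_of_ne hjne with h | h
    · exact h
    · exact absurd h hc
  exact hav a i j hai hij ⟨hji, haval⟩

lemma orderEmb_idx {N k : ℕ} (s : Finset (Fin N)) (h : s.card = k) (t : Fin k) :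
    (s.filter fun c => c < s.orderEmbOfFin h t).card = (t:ℕ) := by
  have himg : s.filter (fun c => c < s.orderEmbOfFin h t)
      = (univ.filter fun u : Fin k => (u:ℕ) < (t:ℕ)).image (s.orderEmbOfFin h) := by
    ext c
    simp only [mem_filter, mem_image, mem_univ, true_and]
    constructor
    · rintro ⟨hc, hlt⟩
      have hrange : c ∈ Set.range (s.orderEmbOfFin h) := by
        rw [range_orderEmbOfFin]
        exact hc
      obtain ⟨u, hu⟩ := hrange
      refine ⟨u, ?_, hu⟩
      rw [← hu] at hlt
      exact Fin.lt_def.mp ((s.orderEmbOfFin h).lt_iff_lt.mp hlt)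
    · rintro ⟨u, hu, rfl⟩
      exact ⟨orderEmbOfFin_mem s h u, (s.orderEmbOfFin h).lt_iff_lt.mpr (Fin.lt_def.mpr hu)⟩
  rw [himg, Finset.card_image_of_injOn ((s.orderEmbOfFin h).injective.injOn)]
  exact card_filter_val_lt (t:ℕ) (by have := t.isLt; omega)

lemma orderEmb_lt_of_count {N : ℕ} (s : Finset (Fin N)) {t : ℕ} (ht : t < s.card) (B : ℕ)
    (hcount : t < (s.filter fun c : Fin N => (c:ℕ) < B).card) :
    ((s.orderEmbOfFin rfl ⟨t, ht⟩ : Fin N) : ℕ) < B := by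
  by_contra hc
  push_neg at hc
  have hsub : s.filter (fun c : Fin N => (c:ℕ) < B)
      ⊆ (univ.filter fun u : Fin s.card => (u:ℕ) < t).image (s.orderEmbOfFin rfl) := by
    intro d hd
    simp only [mem_filter] at hd
    have hrange : d ∈ Set.range (s.orderEmbOfFin rfl) := by
      rw [range_orderEmbOfFin]
      exact hd.1
    obtain ⟨u, hu⟩ := hrange
    refine mem_image.mpr ⟨u, ?_, hu⟩
    simp only [mem_filter, mem_univ, true_and]
    have hlt : s.orderEmbOfFin rfl u < s.orderEmbOfFin rfl ⟨t, ht⟩ := by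
      rw [hu]
      exact Fin.lt_def.mpr (by omega)
    exact Fin.lt_def.mp ((s.orderEmbOfFin rfl).lt_iff_lt.mp hlt)
  have hcard := Finset.card_le_card hsub
  have hle := Finset.card_image_le (s := univ.filter fun u : Fin s.card => (u:ℕ) < t)
    (f := s.orderEmbOfFin rfl)
  have hcardt : (univ.filter fun u : Fin s.card => (u:ℕ) < t).card = t :=
    card_filter_val_lt t (by omega)
  omega

def recP {n : ℕ} (m : Fin (n+1) → Fin (n+1)) (i : Fin n) : Prop :=
  (m i.castSucc : ℕ) < (m i.succ : ℕ)

instance {n : ℕ} (m : Fin (n+1) → Fin (n+1)) : DecidablePred (recP m) :=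
  fun _ => Nat.decLt _ _

def recF {n : ℕ} (m : Fin (n+1) → Fin (n+1)) : Finset (Fin n) := univ.filter (recP m)

def nrF {n : ℕ} (m : Fin (n+1) → Fin (n+1)) : Finset (Fin n) :=
  univ.filter fun i => ¬ recP m i

def vv {n : ℕ} (m : Fin (n+1) → Fin (n+1)) (i : Fin n) : Fin n :=
  ⟨(m i.succ : ℕ) - 1, by have h1 := (m i.succ).isLt; have h2 := i.isLt; omega⟩

def RV {n : ℕ} (m : Fin (n+1) → Fin (n+1)) : Finset (Fin n) := (recF m).image (vv m)

def CC {n : ℕ} (m : Fin (n+1) → Fin (n+1)) : Finset (Fin n) := (RV m)ᶜ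

def idx {n : ℕ} (m : Fin (n+1) → Fin (n+1)) (i : Fin n) : ℕ :=
  ((nrF m).filter fun j => j < i).card

section Phi

variable {n : ℕ} {m : Fin (n+1) → Fin (n+1)}

lemma smono (hm : m ∈ Sset n) {a b : Fin (n+1)} (h : (a:ℕ) ≤ (b:ℕ)) :
    (m a : ℕ) ≤ (m b : ℕ) := (mem_Sset.mp hm).2.2.1 a b (Fin.le_def.mpr h)

lemma sge (hm : m ∈ Sset n) (a : Fin (n+1)) : (a:ℕ) ≤ (m a : ℕ) :=
  (mem_Sset.mp hm).2.2.2 a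

lemma vv_lt_vv (hm : m ∈ Sset n) {a b : Fin n} (ha : recP m a) (hb : recP m b)
    (hab : a < b) : (vv m a : ℕ) < (vv m b : ℕ) := by
  have h1 : (m a.succ : ℕ) ≤ (m b.castSucc : ℕ) := by
    apply smono hm
    simp only [Fin.val_succ, Fin.coe_castSucc]
    exact Fin.lt_def.mp hab
  unfold recP at ha hb
  simp only [vv]
  omega

lemma vv_injOn (hm : m ∈ Sset n) : ∀ a ∈ recF m, ∀ b ∈ recF m, vv m a = vv m b → a = b := by
  intro a ha b hb hab
  simp only [recF, mem_filter, mem_univ, true_and] at ha hb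
  by_contra hne
  rcases lt_or_gt_of_ne hne with h | h
  · exact absurd (Fin.ext_iff.mp hab) (Nat.ne_of_lt (vv_lt_vv hm ha hb h))
  · exact absurd (Fin.ext_iff.mp hab).symm (Nat.ne_of_lt (vv_lt_vv hm hb ha h))

lemma card_RV (hm : m ∈ Sset n) : (RV m).card = (recF m).card :=
  Finset.card_image_of_injOn (vv_injOn hm)

lemma card_rec_add_nr : (recF m).card + (nrF m).card = n := by
  have := Finset.card_filter_add_card_filter_not (s := (univ : Finset (Fin n)))
    (p := recP m)
  simpa [recF, nrF] using this

lemma card_CC (hm : m ∈ Sset n) : (CC m).card = (nrF m).card := by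
  have h1 : (CC m).card = Fintype.card (Fin n) - (RV m).card := Finset.card_compl _
  rw [card_RV hm, Fintype.card_fin] at h1
  have h2 := card_rec_add_nr (m := m)
  have h3 : (recF m).card ≤ n := by
    calc (recF m).card ≤ (univ : Finset (Fin n)).card := card_le_card (filter_subset _ _)
    _ = n := by simp
  omega

lemma idx_lt {i : Fin n} (hi : ¬ recP m i) : idx m i < (nrF m).card := by
  apply Finset.card_lt_card
  rw [Finset.ssubset_iff_of_subset (filter_subset _ _)]
  exact ⟨i, by simp [nrF, hi], by simp⟩

lemma idx_strict {a b : Fin n} (ha : ¬ recP m a) (hab : a < b) : idx m a < idx m b := by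
  apply Finset.card_lt_card
  rw [Finset.ssubset_iff_of_subset]
  · exact ⟨a, by simp [nrF, ha, hab], by simp⟩
  · intro x hx
    simp only [mem_filter] at hx ⊢
    exact ⟨hx.1, lt_trans hx.2 hab⟩

def phiF (m : Fin (n+1) → Fin (n+1)) (hm : m ∈ Sset n) : Fin n → Fin n := fun i =>
  if h : recP m i then vv m i
  else (CC m).orderEmbOfFin rfl ⟨idx m i, by rw [card_CC hm]; exact idx_lt h⟩

lemma phiF_mem_CC {i : Fin n} (hm : m ∈ Sset n) (hi : ¬ recP m i) : phiF m hm i ∈ CC m := by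
  simp only [phiF, dif_neg hi]
  exact orderEmbOfFin_mem _ _ _

lemma phiF_nonrec_lt (hm : m ∈ Sset n) {a b : Fin n} (ha : ¬ recP m a) (hb : ¬ recP m b)
    (hab : a < b) : phiF m hm a < phiF m hm b := by
  simp only [phiF, dif_neg ha, dif_neg hb]
  exact ((CC m).orderEmbOfFin rfl).lt_iff_lt.mpr (Fin.lt_def.mpr (by
    simp only [Fin.val_mk]
    exact idx_strict ha hab))

lemma count_calc (hm : m ∈ Sset n) {i : Fin n} (hi : ¬ recP m i) :
    idx m i < ((CC m).filter fun c : Fin n => (c:ℕ) < (m i.succ : ℕ)).card := by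
  have hB1 : ((i:ℕ)+1) ≤ (m i.succ : ℕ) := by
    have := sge hm i.succ
    simpa [Fin.val_succ] using this
  have hBn : (m i.succ : ℕ) ≤ n := by have := (m i.succ).isLt; omega
  have himg : (RV m).filter (fun c : Fin n => (c:ℕ) < (m i.succ : ℕ))
      = ((recF m).filter fun j => j < i).image (vv m) := by
    ext c
    simp only [RV, mem_filter, mem_image]
    constructor
    · rintro ⟨⟨j, hj, rfl⟩, hcB⟩
      refine ⟨j, ⟨hj, ?_⟩, rfl⟩
      have hjr : recP m j := by simpa [recF, mem_filter] using hj
      by_contra hge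
      have hij : i < j := by
        rcases lt_trichotomy i j with h | h | h
        · exact h
        · exact absurd hjr (h ▸ hi)
        · exact absurd h hge
      have h1 : (m i.succ:ℕ) ≤ (m j.castSucc:ℕ) := by
        apply smono hm
        simp only [Fin.val_succ, Fin.coe_castSucc]
        exact Fin.lt_def.mp hij
      unfold recP at hjr
      simp only [vv] at hcB
      omega
    · rintro ⟨j, hj, rfl⟩
      refine ⟨⟨j, hj.1, rfl⟩, ?_⟩
      have h1 : (m j.succ:ℕ) ≤ (m i.succ:ℕ) := by
        apply smono hm
        simp only [Fin.val_succ]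
        have := Fin.lt_def.mp hj.2
        omega
      simp only [vv]
      omega
  have hcard1 : ((RV m).filter fun c : Fin n => (c:ℕ) < (m i.succ : ℕ)).card
      = ((recF m).filter fun j => j < i).card := by
    rw [himg]
    exact Finset.card_image_of_injOn (fun a ha b hb hab =>
      vv_injOn hm a (mem_of_mem_filter a ha) b (mem_of_mem_filter b hb) hab)
  have hsplit : ((CC m).filter fun c : Fin n => (c:ℕ) < (m i.succ : ℕ)).card
      + ((RV m).filter fun c : Fin n => (c:ℕ) < (m i.succ : ℕ)).card = (m i.succ : ℕ) := by
    have htot := card_filter_val_lt (n := n) (m i.succ : ℕ) hBn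
    have hpart := Finset.card_filter_add_card_filter_not
      (s := univ.filter fun c : Fin n => (c:ℕ) < (m i.succ : ℕ)) (p := fun c => c ∈ RV m)
    have e1 : (univ.filter fun c : Fin n => (c:ℕ) < (m i.succ : ℕ)).filter (fun c => c ∈ RV m)
        = (RV m).filter (fun c : Fin n => (c:ℕ) < (m i.succ : ℕ)) := by
      ext c
      simp only [mem_filter, mem_univ, true_and]
      tauto
    have e2 : (univ.filter fun c : Fin n => (c:ℕ) < (m i.succ : ℕ)).filter (fun c => ¬ c ∈ RV m)
        = (CC m).filter (fun c : Fin n => (c:ℕ) < (m i.succ : ℕ)) := by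
      ext c
      simp only [mem_filter, mem_univ, true_and, CC, mem_compl]
      tauto
    rw [e1, e2] at hpart
    omega
  have hidx : idx m i + ((recF m).filter fun j => j < i).card = (i:ℕ) := by
    have htot : (univ.filter fun c : Fin n => c < i).card = (i:ℕ) := by
      have h := card_filter_val_lt (n := n) (i:ℕ) (le_of_lt i.isLt)
      rw [← h]
      apply congrArg Finset.card
      apply Finset.filter_congr
      intro c _
      exact Fin.lt_def
    have hpart := Finset.card_filter_add_card_filter_not
      (s := univ.filter fun c : Fin n => c < i) (p := recP m)
    have e1 : (univ.filter fun c : Fin n => c < i).filter (recP m)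
        = (recF m).filter (fun j => j < i) := by
      ext c
      simp only [mem_filter, mem_univ, true_and, recF]
      tauto
    have e2 : (univ.filter fun c : Fin n => c < i).filter (fun c => ¬ recP m c)
        = (nrF m).filter (fun j => j < i) := by
      ext c
      simp only [mem_filter, mem_univ, true_and, nrF]
      tauto
    rw [e1, e2] at hpart
    unfold idx
    omega
  omega

lemma phiF_lt_succ (hm : m ∈ Sset n) (i : Fin n) : (phiF m hm i : ℕ) < (m i.succ : ℕ) := by
  by_cases h : recP m i
  · simp only [phiF, dif_pos h, vv]
    unfold recP at h
    omega
  · simp only [phiF, dif_neg h]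
    exact orderEmb_lt_of_count (CC m) (by rw [card_CC hm]; exact idx_lt h) _ (count_calc hm h)

lemma phiF_rec_gt (hm : m ∈ Sset n) {a b : Fin n} (hb : recP m b) (hab : a < b) :
    phiF m hm a < phiF m hm b := by
  have h1 := phiF_lt_succ hm a
  have h2 : (m a.succ : ℕ) ≤ (m b.castSucc : ℕ) := by
    apply smono hm
    simp only [Fin.val_succ, Fin.coe_castSucc]
    exact Fin.lt_def.mp hab
  have h3 : (m b.castSucc : ℕ) < (m b.succ : ℕ) := hb
  rw [Fin.lt_def]
  have h4 : (phiF m hm b : ℕ) = (m b.succ : ℕ) - 1 := by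
    simp only [phiF, dif_pos hb, vv]
  omega

lemma phiF_inj (hm : m ∈ Sset n) : Function.Injective (phiF m hm) := by
  intro a b hab
  by_contra hne
  have key : ∀ x y : Fin n, x < y → phiF m hm x = phiF m hm y → False := by
    intro x y hxy heq
    by_cases hy : recP m y
    · exact absurd (Fin.ext_iff.mp heq) (Nat.ne_of_lt (Fin.lt_def.mp (phiF_rec_gt hm hy hxy)))
    · by_cases hx : recP m x
      · have hmem := phiF_mem_CC hm hy
        rw [← heq] at hmem
        simp only [phiF, dif_pos hx] at hmem
        simp only [CC, mem_compl, RV] at hmem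
        exact hmem (mem_image.mpr ⟨x, by simp [recF, hx], rfl⟩)
      · exact absurd (Fin.ext_iff.mp heq) (Nat.ne_of_lt (Fin.lt_def.mp (phiF_nonrec_lt hm hx hy hxy)))
  rcases lt_or_gt_of_ne hne with h | h
  · exact key a b h hab
  · exact key b a h hab.symm

noncomputable def phiPerm (m : Fin (n+1) → Fin (n+1)) (hm : m ∈ Sset n) : Equiv.Perm (Fin n) :=
  Equiv.ofBijective (phiF m hm) (Finite.injective_iff_bijective.mp (phiF_inj hm))

lemma phiPerm_apply (hm : m ∈ Sset n) (i : Fin n) : phiPerm m hm i = phiF m hm i := rfl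

lemma phiPerm_av (hm : m ∈ Sset n) : AvP (phiPerm m hm) := by
  intro a b c hab hbc hcon
  obtain ⟨h1, h2⟩ := hcon
  rw [phiPerm_apply, phiPerm_apply] at h1 h2
  by_cases hb : recP m b
  · exact absurd (phiF_rec_gt hm hb hab) (asymm h2)
  · by_cases hc : recP m c
    · exact absurd (phiF_rec_gt hm hc hbc) (asymm h1)
    · exact absurd (phiF_nonrec_lt hm hb hc hbc) (asymm h1)

end Phi


section Final

variable {n : ℕ} {m : Fin (n+1) → Fin (n+1)}

lemma toSeq_phiPerm (hm : m ∈ Sset n) : toSeq (phiPerm m hm) = m := by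
  have key : ∀ t (ht : t ≤ n), runMax (phiPerm m hm) t = (m ⟨t, by omega⟩ : ℕ) := by
    intro t
    induction t with
    | zero =>
      intro _
      rw [runMax_zero]
      have h0 := (mem_Sset.mp hm).1
      have hz : (⟨0, by omega⟩ : Fin (n+1)) = 0 := Fin.ext (by simp)
      rw [hz, h0, Fin.val_zero]
    | succ t ihp =>
      intro ht
      have htn : t < n := ht
      rw [runMax_succ _ t htn, ihp (by omega)]
      set i : Fin n := ⟨t, htn⟩ with hidef
      have hcs : (m i.castSucc : ℕ) = (m ⟨t, by omega⟩ : ℕ) := rfl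
      have hsc : (m i.succ : ℕ) = (m ⟨t+1, by omega⟩ : ℕ) := rfl
      by_cases h : recP m i
      · have hval : (phiPerm m hm i : ℕ) = (m i.succ : ℕ) - 1 := by
          rw [phiPerm_apply]
          simp only [phiF, dif_pos h, vv]
        rw [hval]
        unfold recP at h
        rw [← hcs, ← hsc]
        omega
      · have hval := phiF_lt_succ hm i
        have hne : ¬ (m i.castSucc:ℕ) < (m i.succ:ℕ) := h
        have hmono2 : (m i.castSucc:ℕ) ≤ (m i.succ:ℕ) :=
          smono hm (by simp [Fin.coe_castSucc, Fin.val_succ])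
        rw [phiPerm_apply]
        rw [← hcs, ← hsc]
        omega
  funext i
  apply Fin.ext
  have hk := key (i:ℕ) (by have := i.isLt; omega)
  simp only [toSeq]
  rw [hk]

lemma av_eq_phiF {ρ : Equiv.Perm (Fin n)} (hav : AvP ρ) (i : Fin n) :
    ρ i = phiF (toSeq ρ) (toSeq_mem_Sset ρ) i := by
  set m := toSeq ρ with hmdef
  have hm := toSeq_mem_Sset ρ
  have hcs : ∀ j : Fin n, (m j.castSucc : ℕ) = runMax ρ (j:ℕ) := fun _ => rfl
  have hsc : ∀ j : Fin n, (m j.succ : ℕ) = runMax ρ ((j:ℕ)+1) := fun _ => rfl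
  have hrs : ∀ j : Fin n, runMax ρ ((j:ℕ)+1) = max ((ρ j:ℕ)+1) (runMax ρ (j:ℕ)) := by
    intro j
    have h := runMax_succ ρ (j:ℕ) j.isLt
    rw [Fin.eta] at h
    exact h
  have hrecval : ∀ j : Fin n, recP m j → (ρ j : ℕ) = (m j.succ:ℕ) - 1 := by
    intro j hj
    have h1 := hrs j
    unfold recP at hj
    rw [hcs, hsc] at hj
    rw [hsc]
    omega
  have hnrec : ∀ j : Fin n, ¬recP m j → (ρ j:ℕ) < runMax ρ (j:ℕ) := by
    intro j hj
    have h1 := hrs j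
    unfold recP at hj
    rw [hcs, hsc] at hj
    omega
  by_cases h : recP m i
  · simp only [phiF, dif_pos h]
    apply Fin.ext
    simp only [vv]
    rw [dif_pos (show recP (toSeq ρ) i from h)]
    exact hrecval i h
  · have hcard : (CC m).card = (nrF m).card := card_CC hm
    set f : Fin ((nrF m).card) → Fin n := fun t => ρ ((nrF m).orderEmbOfFin rfl t) with hfdef
    have hfmem : ∀ t, f t ∈ CC m := by
      intro t
      have hmem := orderEmbOfFin_mem (nrF m) rfl t
      simp only [nrF, mem_filter, mem_univ, true_and] at hmem
      simp only [hfdef, CC, mem_compl, RV, mem_image]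
      rintro ⟨j, hj, hval⟩
      simp only [recF, mem_filter, mem_univ, true_and] at hj
      have hvj : vv m j = ρ j := Fin.ext (by simp only [vv]; exact (hrecval j hj).symm)
      rw [hvj] at hval
      have hje := ρ.injective hval
      rw [hje] at hj
      exact hmem hj
    have hfmono : StrictMono f := by
      intro a b hab
      apply nonrec_mono hav
      · have hmem := orderEmbOfFin_mem (nrF m) rfl a
        simp only [nrF, mem_filter, mem_univ, true_and] at hmem
        exact hnrec _ hmem
      · exact ((nrF m).orderEmbOfFin rfl).lt_iff_lt.mpr hab
    have hfeq : f = (CC m).orderEmbOfFin hcard := orderEmbOfFin_unique hcard hfmem hfmono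
    have hiNR : i ∈ nrF m := by simp [nrF, h]
    have hrange : i ∈ Set.range ((nrF m).orderEmbOfFin rfl) := by
      rw [range_orderEmbOfFin]
      exact hiNR
    obtain ⟨t, htEq⟩ := hrange
    have hidxEq : (t:ℕ) = idx m i := by
      have hoi := orderEmb_idx (nrF m) rfl t
      rw [htEq] at hoi
      unfold idx
      omega
    have hfin : ρ i = (CC m).orderEmbOfFin hcard t := by
      rw [← htEq]
      exact congrFun hfeq t
    rw [hfin]
    simp only [phiF, dif_neg h]
    rw [dif_neg (show ¬recP (toSeq ρ) i from h)]
    exact orderEmbOfFin_eq_orderEmbOfFin_iff.mpr (by exact hidxEq)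

lemma phiPerm_congr {m m' : Fin (n+1) → Fin (n+1)} (h : m = m') (hm : m ∈ Sset n)
    (hm' : m' ∈ Sset n) : phiPerm m hm = phiPerm m' hm' := by
  subst h
  rfl

end Final

/-- The number of (3,2,1)-avoiding permutations of {1,…,n} is the n-th Catalan number. -/
theorem card_avoiding_321_eq_catalan (n : ℕ) :
    (Finset.univ.filter (fun ρ : Equiv.Perm (Fin n) =>
      ∀ a b c : Fin n, a < b → b < c → ¬(ρ c < ρ b ∧ ρ b < ρ a))).card = catalan n := by
  rw [← card_Sset n]
  apply Finset.card_bij (i := fun ρ _ => toSeq ρ)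
  · intro ρ _
    exact toSeq_mem_Sset ρ
  · intro ρ1 h1 ρ2 h2 heq
    have hav1 : AvP ρ1 := (mem_filter.mp h1).2
    have hav2 : AvP ρ2 := (mem_filter.mp h2).2
    have e1 : ρ1 = phiPerm (toSeq ρ1) (toSeq_mem_Sset ρ1) := Equiv.ext (av_eq_phiF hav1)
    have e2 : ρ2 = phiPerm (toSeq ρ2) (toSeq_mem_Sset ρ2) := Equiv.ext (av_eq_phiF hav2)
    rw [e1, e2]
    exact phiPerm_congr heq _ _
  · intro mm hmS
    exact ⟨phiPerm mm hmS, mem_filter.mpr ⟨mem_univ _, phiPerm_av hmS⟩, toSeq_phiPerm hmS⟩
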